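/- The pair ((U, q̄), i), where U := Â/R, q̄ := q̂ + R and i(x) := x̂ + R, is an enveloping^{6-th} algebra of the Lie algebra L: (i) i is a Lie algebra homomorphism from L to the Lie algebra (U,q̄) with bracket [a,b]_{6,k} = ab − ba − abq̄ + baq̄ + kaq̄b − kbq̄a, and (ii) for any invariant algebra (A,q) and any Lie algebra homomorphism f : L → Lie((A,q),[·,·]_{6,k}) there exists a unique invariant homomorphism f' : (U,q̄) → (A,q) with f = f' ∘ i. -/

import Mathlib

noncomputable section

/-- The free `K`-vector space on `X ⊕ {q̃}`. -/
abbrev FreeInvModule (K : Type*) [Field K] (X : Type*) : Type _ := (X ⊕ Unit) →₀ K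

/-- The generator `q̃` inside the tensor algebra `T(V)`. -/
def qTilde (K : Type*) [Field K] (X : Type*) : TensorAlgebra K (FreeInvModule K X) :=
  TensorAlgebra.ι K (Finsupp.single (Sum.inr ()) 1)

/-- The relations generating the ideal `I`: `q̃⊗q̃ = q̃` and `q̃⊗a⊗q̃ = q̃⊗a` for all `a`. -/
inductive InvRel (K : Type*) [Field K] (X : Type*) :
    TensorAlgebra K (FreeInvModule K X) → TensorAlgebra K (FreeInvModule K X) → Prop
  | idem : InvRel K X (qTilde K X * qTilde K X) (qTilde K X)
  | inv (a : TensorAlgebra K (FreeInvModule K X)) :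
      InvRel K X (qTilde K X * a * qTilde K X) (qTilde K X * a)

/-- The free invariant algebra `Â = T(V)/I`. -/
abbrev FreeInvAlg (K : Type*) [Field K] (X : Type*) : Type _ := RingQuot (InvRel K X)

/-- `q̂ = q̃ + I`. -/
def qHat (K : Type*) [Field K] (X : Type*) : FreeInvAlg K X :=
  RingQuot.mkAlgHom K (InvRel K X) (qTilde K X)

variable (K : Type*) [Field K]

/-- The linear embedding `L → Â` extending `î` on the basis `X = {x_j}`. -/
def lHat (J : Type*) (L : Type*) [AddCommGroup L] [Module K L] (b : Module.Basis J K L) :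
    L →ₗ[K] FreeInvAlg K J :=
  (RingQuot.mkAlgHom K (InvRel K J)).toLinearMap ∘ₗ
    (TensorAlgebra.ι K (M := FreeInvModule K J)) ∘ₗ
      (Finsupp.lmapDomain K K Sum.inl) ∘ₗ b.repr.toLinearMap

/-- The relations generating the ideal `R`:
`[x,y]^ = x̂ŷ - ŷx̂ - x̂ŷq̂ + ŷx̂q̂ + k x̂q̂ŷ - k ŷq̂x̂` for all `x, y ∈ L`. -/
inductive LieRel (J : Type*) (L : Type*) [LieRing L] [LieAlgebra K L]
    (b : Module.Basis J K L) (c : K) : FreeInvAlg K J → FreeInvAlg K J → Prop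
  | rel (x y : L) : LieRel J L b c (lHat K J L b ⁅x, y⁆)
      (lHat K J L b x * lHat K J L b y - lHat K J L b y * lHat K J L b x
        - lHat K J L b x * lHat K J L b y * qHat K J
        + lHat K J L b y * lHat K J L b x * qHat K J
        + c • (lHat K J L b x * qHat K J * lHat K J L b y)
        - c • (lHat K J L b y * qHat K J * lHat K J L b x))

/-- The enveloping⁶ᵗʰ algebra `U = Â/R`. -/
abbrev EnvLie (J : Type*) (L : Type*) [LieRing L] [LieAlgebra K L]
    (b : Module.Basis J K L) (c : K) : Type _ := RingQuot (LieRel K J L b c)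

/-- `q̄ = q̂ + R`. -/
def qBar (J : Type*) (L : Type*) [LieRing L] [LieAlgebra K L]
    (b : Module.Basis J K L) (c : K) : EnvLie K J L b c :=
  RingQuot.mkAlgHom K (LieRel K J L b c) (qHat K J)

/-- The canonical linear map `i : L → U`, `i(x) = x̂ + R`. -/
def iEnv (J : Type*) (L : Type*) [LieRing L] [LieAlgebra K L]
    (b : Module.Basis J K L) (c : K) : L →ₗ[K] EnvLie K J L b c :=
  (RingQuot.mkAlgHom K (LieRel K J L b c)).toLinearMap ∘ₗ lHat K J L b

/-- auxiliary: the invariance property is closed under multiplication. -/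
lemma qinv_mul {A : Type*} [Ring A] {q x y : A} (hx : q * x * q = q * x)
    (hy : q * y * q = q * y) : q * (x * y) * q = q * (x * y) := by
  have e1 : q * (x * y) * q = q * x * (y * q) := by simp [mul_assoc]
  have e2 : q * x * (y * q) = q * x * q * (y * q) := by rw [hx]
  have e3 : q * x * q * (y * q) = q * x * (q * y * q) := by simp [mul_assoc]
  have e5 : q * x * (q * y) = q * x * q * y := by simp [mul_assoc]
  have e7 : q * x * y = q * (x * y) := by simp [mul_assoc]
  rw [e1, e2, e3, hy, e5, hx, e7]

/-- `((U,q̄), i)` is an enveloping⁶ᵗʰ algebra of the Lie algebra `L`: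
(i) `i` is a Lie algebra homomorphism into `(U,q̄)` with the 6-th square bracket, and
(ii) for any invariant algebra `(A,q)` and any Lie algebra homomorphism
`f : L → Lie((A,q), [·,·]_{6,k})` there is a unique invariant homomorphism
`f' : (U,q̄) → (A,q)` with `f = f' ∘ i`. -/
theorem envLie_is_enveloping (J : Type*) (L : Type*) [LieRing L] [LieAlgebra K L]
    (b : Module.Basis J K L) (c : K) (hc : c ≠ 0) :
    -- (i)
    (∀ x y : L,
      iEnv K J L b c ⁅x, y⁆ =
        iEnv K J L b c x * iEnv K J L b c y - iEnv K J L b c y * iEnv K J L b c x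
          - iEnv K J L b c x * iEnv K J L b c y * qBar K J L b c
          + iEnv K J L b c y * iEnv K J L b c x * qBar K J L b c
          + c • (iEnv K J L b c x * qBar K J L b c * iEnv K J L b c y)
          - c • (iEnv K J L b c y * qBar K J L b c * iEnv K J L b c x)) ∧
    -- (ii)
    (∀ (A : Type*) [Ring A] [Algebra K A] (q : A), q * q = q →
      ∀ f : L →ₗ[K] A, (∀ x : L, q * f x * q = q * f x) →
      (∀ x y : L,
        f ⁅x, y⁆ = f x * f y - f y * f x - f x * f y * q + f y * f x * q
          + c • (f x * q * f y) - c • (f y * q * f x)) →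
      ∃! f' : EnvLie K J L b c →ₐ[K] A,
        (f' (qBar K J L b c) = q) ∧ (∀ x : L, f' (iEnv K J L b c x) = f x)) := by
  constructor
  · intro x y
    have h := RingQuot.mkAlgHom_rel K (LieRel.rel (K := K) (b := b) (c := c) x y)
    simp only [map_sub, map_add, map_mul, map_smul] at h
    simpa [iEnv, qBar] using h
  · intro A _ _ q hq f hinv hbr
    set g : FreeInvModule K J →ₗ[K] A :=
      Finsupp.lift A K (J ⊕ Unit) (Sum.elim (fun j => f (b j)) (fun _ => q)) with hg
    set φ : TensorAlgebra K (FreeInvModule K J) →ₐ[K] A := TensorAlgebra.lift K g with hφ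
    have hφι : ∀ v, φ (TensorAlgebra.ι K v) = g v := fun v => TensorAlgebra.lift_ι_apply g v
    have hgsingle : ∀ (a : J ⊕ Unit) (r : K),
        g (Finsupp.single a r) = r • Sum.elim (fun j => f (b j)) (fun _ => q) a := by
      intro a r
      simp [hg, Finsupp.lift_apply, Finsupp.sum_single_index]
    have hφq : φ (qTilde K J) = q := by
      rw [qTilde, hφι, hgsingle]
      simp
    have hginv : ∀ v, q * g v * q = q * g v := by
      intro v
      induction v using Finsupp.induction_linear with
      | zero => simp
      | add u w hu hw => simp only [map_add, mul_add, add_mul, hu, hw]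
      | single a r =>
        rw [hgsingle]
        cases a with
        | inl j =>
          simp only [Sum.elim_inl, mul_smul_comm, smul_mul_assoc]
          rw [hinv (b j)]
        | inr u =>
          simp only [Sum.elim_inr, mul_smul_comm, smul_mul_assoc, hq]
    have hφinv : ∀ a, q * φ a * q = q * φ a := by
      intro a
      induction a using TensorAlgebra.induction with
      | algebraMap r =>
        rw [AlgHom.commutes, ← Algebra.commutes r q, mul_assoc, hq]
      | ι v => rw [hφι]; exact hginv v
      | mul x y hx hy => rw [map_mul]; exact qinv_mul hx hy
      | add x y hx hy => simp only [map_add, mul_add, add_mul, hx, hy]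
    set ψ : FreeInvAlg K J →ₐ[K] A := RingQuot.liftAlgHom K ⟨φ, by
      intro u v huv
      cases huv with
      | idem => rw [map_mul, hφq, hq]
      | inv a =>
        simp only [map_mul, hφq]
        exact hφinv a⟩ with hψ
    have hψmk : ∀ a, ψ (RingQuot.mkAlgHom K (InvRel K J) a) = φ a := fun a =>
      RingQuot.liftAlgHom_mkAlgHom_apply K _ _ _
    have hψq : ψ (qHat K J) = q := by rw [qHat, hψmk, hφq]
    have hlHat : ∀ j : J, lHat K J L b (b j) = RingQuot.mkAlgHom K (InvRel K J)
        (TensorAlgebra.ι K (Finsupp.single (Sum.inl j) (1 : K))) := by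
      intro j
      simp only [lHat, LinearMap.comp_apply, AlgHom.toLinearMap_apply,
        LinearEquiv.coe_toLinearMap, Module.Basis.repr_self, Finsupp.lmapDomain_apply,
        Finsupp.mapDomain_single]
    have hψl : ∀ x : L, ψ (lHat K J L b x) = f x := by
      have heq : (ψ.toLinearMap ∘ₗ lHat K J L b) = f := by
        apply b.ext
        intro j
        simp only [LinearMap.comp_apply, AlgHom.toLinearMap_apply]
        rw [hlHat, hψmk, hφι, hgsingle]
        simp
      intro x
      exact LinearMap.congr_fun heq x
    set F : EnvLie K J L b c →ₐ[K] A := RingQuot.liftAlgHom K ⟨ψ, by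
      intro u v huv
      cases huv with
      | rel x y =>
        simp only [map_sub, map_add, map_mul, map_smul, hψl, hψq]
        exact hbr x y⟩ with hF
    have hFmk : ∀ a, F (RingQuot.mkAlgHom K (LieRel K J L b c) a) = ψ a := fun a =>
      RingQuot.liftAlgHom_mkAlgHom_apply K _ _ _
    have hFq : F (qBar K J L b c) = q := by rw [qBar, hFmk, hψq]
    have hFi : ∀ x : L, F (iEnv K J L b c x) = f x := by
      intro x
      simp only [iEnv, LinearMap.comp_apply, AlgHom.toLinearMap_apply]
      rw [hFmk, hψl]
    refine ⟨F, ⟨hFq, hFi⟩, ?_⟩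
    rintro G ⟨hGq, hGi⟩
    have hiEnvj : ∀ j : J, iEnv K J L b c (b j) =
        RingQuot.mkAlgHom K (LieRel K J L b c)
          (RingQuot.mkAlgHom K (InvRel K J)
            (TensorAlgebra.ι K (Finsupp.single (Sum.inl j) (1 : K)))) := by
      intro j
      simp only [iEnv, LinearMap.comp_apply, AlgHom.toLinearMap_apply]
      rw [hlHat]
    have hqBar : qBar K J L b c =
        RingQuot.mkAlgHom K (LieRel K J L b c)
          (RingQuot.mkAlgHom K (InvRel K J)
            (TensorAlgebra.ι K (Finsupp.single (Sum.inr ()) (1 : K)))) := rfl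
    have key : G.comp ((RingQuot.mkAlgHom K (LieRel K J L b c)).comp
        (RingQuot.mkAlgHom K (InvRel K J))) =
        F.comp ((RingQuot.mkAlgHom K (LieRel K J L b c)).comp
        (RingQuot.mkAlgHom K (InvRel K J))) := by
      apply TensorAlgebra.hom_ext
      apply LinearMap.ext
      intro v
      induction v using Finsupp.induction_linear with
      | zero => simp
      | add u w hu hw => simp only [map_add, hu, hw]
      | single a r =>
        have hsingle : (Finsupp.single a r : FreeInvModule K J)
            = r • Finsupp.single a 1 := by
          rw [Finsupp.smul_single, smul_eq_mul, mul_one]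
        simp only [LinearMap.comp_apply, AlgHom.toLinearMap_apply, AlgHom.coe_comp,
          Function.comp_apply, hsingle, map_smul]
        cases a with
        | inl j => rw [← hiEnvj, hGi, hFi]
        | inr u => rw [← hqBar, hGq, hFq]
    have hsurj : Function.Surjective ⇑((RingQuot.mkAlgHom K (LieRel K J L b c)).comp
        (RingQuot.mkAlgHom K (InvRel K J))) := by
      rw [AlgHom.coe_comp]
      exact (RingQuot.mkAlgHom_surjective K _).comp (RingQuot.mkAlgHom_surjective K _)
    apply AlgHom.ext
    intro u
    obtain ⟨t, rfl⟩ := hsurj u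
    exact AlgHom.congr_fun key t
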